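/- Let n ≥ 1 and let P be a hive of size n. Then the GT pattern obtained from the commutor output P⋆ by taking row differences equals the Schützenberger involution applied to the GT pattern obtained from P by taking north-east differences: \widehat{P⋆} = ξ(P̃). -/

import Mathlib

def inDelta (n x y z : ℤ) : Prop := 0 ≤ x ∧ 0 ≤ y ∧ 0 ≤ z ∧ x + y + z = n

instance (n x y z : ℤ) : Decidable (inDelta n x y z) :=
  inferInstanceAs (Decidable (0 ≤ x ∧ 0 ≤ y ∧ 0 ≤ z ∧ x + y + z = n))

/-- Hive inequality (i): horizontal rhombi of the first kind. -/
def HiveCondI (n : ℤ) (P : ℤ → ℤ → ℤ → ℤ) : Prop :=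
  ∀ x y z : ℤ, inDelta n x y z → inDelta n x (y+1) (z-1) → inDelta n (x+1) y (z-1) →
    inDelta n (x-1) (y+1) z →
    P (x+1) y (z-1) + P (x-1) (y+1) z ≤ P x y z + P x (y+1) (z-1)

/-- Hive inequality (ii): horizontal rhombi of the second kind. -/
def HiveCondII (n : ℤ) (P : ℤ → ℤ → ℤ → ℤ) : Prop :=
  ∀ x y z : ℤ, inDelta n x y z → inDelta n (x+1) y (z-1) → inDelta n x (y+1) (z-1) →
    inDelta n (x+1) (y-1) z →
    P x (y+1) (z-1) + P (x+1) (y-1) z ≤ P x y z + P (x+1) y (z-1)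

/-- Hive inequality (iii): vertical rhombi. -/
def HiveCondIII (n : ℤ) (P : ℤ → ℤ → ℤ → ℤ) : Prop :=
  ∀ x y z : ℤ, inDelta n x y z → inDelta n (x+1) (y-1) z → inDelta n (x+1) y (z-1) →
    inDelta n x (y-1) (z+1) →
    P (x+1) y (z-1) + P x (y-1) (z+1) ≤ P x y z + P (x+1) (y-1) z

/-- A quasi-hive: satisfies conditions (i) and (ii) only. -/
def IsQuasiHive (n : ℤ) (P : ℤ → ℤ → ℤ → ℤ) : Prop := HiveCondI n P ∧ HiveCondII n P

/-- A hive of size `n`, normalized by `P 0 0 n = 0` and encoded as the function on `ℤ³`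
which is zero outside the triangle `Δ_n`. -/
def IsHive (n : ℤ) (P : ℤ → ℤ → ℤ → ℤ) : Prop :=
  HiveCondI n P ∧ HiveCondII n P ∧ HiveCondIII n P ∧ P 0 0 n = 0 ∧
    ∀ x y z : ℤ, ¬ inDelta n x y z → P x y z = 0

/-- `lam 1, …, lam n` is weakly decreasing. -/
def WeaklyDecr (n : ℤ) (lam : ℤ → ℤ) : Prop :=
  ∀ k : ℤ, 1 ≤ k → k + 1 ≤ n → lam (k+1) ≤ lam k

/-- The set `HIVE_{λμ}^ν`. -/
def HiveSet (n : ℤ) (lam mu nu : ℤ → ℤ) : Set (ℤ → ℤ → ℤ → ℤ) :=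
  {P | IsHive n P ∧ ∀ k : ℤ, 1 ≤ k → k ≤ n →
    P (n-k) k 0 - P (n-k+1) (k-1) 0 = lam k ∧
    P k 0 (n-k) - P (k-1) 0 (n-k+1) = mu k ∧
    P 0 k (n-k) - P 0 (k-1) (n-k+1) = nu k}

/-- The lattice `L'` of the 1/4-octahedron. -/
def inLQ (n x y t : ℤ) : Prop :=
  0 ≤ x ∧ 0 ≤ y ∧ x + y ≤ n ∧ x + y ≤ t ∧ t ≤ 2*n - x - y ∧ 2 ∣ (x + y + t)

/-- `f` solves the modified octahedron recurrence on the 1/4-octahedron with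
initial condition the hive `P`. -/
def OctQ (n : ℤ) (P f : ℤ → ℤ → ℤ → ℤ) : Prop :=
  (∀ x y z : ℤ, inDelta n x y z → f z x (n - y) = P x y z) ∧
  (∀ x y t : ℤ, inLQ n x y (t+1) → x + y < t + 1 → 0 < x → 0 < y →
      f x y (t+1) = max (f (x+1) y t + f (x-1) y t) (f x (y+1) t + f x (y-1) t)
        - f x y (t-1)) ∧
  (∀ x t : ℤ, inLQ n x 0 (t+1) → x < t + 1 → 0 < x →
      f x 0 (t+1) = f (x+1) 0 t + f (x-1) 0 t - f x 0 (t-1)) ∧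
  (∀ y t : ℤ, inLQ n 0 y (t+1) → y < t + 1 → 0 < y →
      f 0 y (t+1) = f 0 (y+1) t + f 0 (y-1) t - f 0 y (t-1)) ∧
  (∀ t : ℤ, inLQ n 0 0 (t+1) → 0 < t + 1 →
      f 0 0 (t+1) = f 1 0 t + f 0 1 t - f 0 0 (t-1))

/-- The commutor output `P⋆(x,y,z) = f(x,y,n+z) − f(0,0,2n)`, encoded as the function
which is zero outside `Δ_n`. -/
def PstarFun (n : ℤ) (f : ℤ → ℤ → ℤ → ℤ) : ℤ → ℤ → ℤ → ℤ := fun x y z =>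
  if inDelta n x y z then f x y (n + z) - f 0 0 (2*n) else 0

/-- `P̂(i,j) = P(i−j,j,n−i) − P(i−j+1,j−1,n−i)`: row differences of a (quasi-)hive. -/
def hatGT (n : ℤ) (P : ℤ → ℤ → ℤ → ℤ) : ℤ → ℤ → ℤ := fun i j =>
  P (i-j) j (n-i) - P (i-j+1) (j-1) (n-i)

/-- `P̃(i,j) = P(j,n−i,i−j) − P(j−1,n−i,i−j+1)`: north-east differences of a hive. -/
def tildeGT (n : ℤ) (P : ℤ → ℤ → ℤ → ℤ) : ℤ → ℤ → ℤ := fun i j =>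
  P j (n-i) (i-j) - P (j-1) (n-i) (i-j+1)

/-- The Bender–Knuth move `s_i` on (the functional encoding of) GT patterns.  An undefined
argument of `min`/`max` (namely `T(i−1,j−1)` when `j = 1`, and `T(i−1,j)` when `j = i`)
is omitted. -/
def BK (i : ℤ) (T : ℤ → ℤ → ℤ) : ℤ → ℤ → ℤ := fun k j =>
  if k = i then
    (if j = 1 then T (i+1) j else min (T (i+1) j) (T (i-1) (j-1))) +
      (if j = i then T (i+1) (j+1) else max (T (i+1) (j+1)) (T (i-1) j)) - T i j
  else T k j

/-- `BKchain m T = s_m (s_{m−1} ⋯ (s_1 T))`. -/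
def BKchain : ℕ → (ℤ → ℤ → ℤ) → ℤ → ℤ → ℤ
  | 0, T => T
  | m+1, T => BK ((m : ℤ) + 1) (BKchain m T)

/-- `xiGT (n-1)` is the Schützenberger involution
`ξ = s_1 (s_2 s_1) ⋯ (s_{n−1} s_{n−2} ⋯ s_1)` for patterns of size `n`
(the rightmost factor applied first). -/
def xiGT : ℕ → (ℤ → ℤ → ℤ) → ℤ → ℤ → ℤ
  | 0, T => T
  | m+1, T => xiGT m (BKchain (m+1) T)

/-- Solution of the octahedron recurrence, organized by time `t : ℕ`. -/
def gRec (n : ℤ) (P : ℤ → ℤ → ℤ → ℤ) : ℕ → ℤ → ℤ → ℤ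
  | 0 => fun x y => P y (n - x - y) x
  | 1 => fun x y => P y (n - x - y) x
  | (t+2) => fun x y =>
      if (t : ℤ) + 2 ≤ x + y then P y (n - x - y) x
      else if 0 < x then
        if 0 < y then
          max (gRec n P (t+1) (x+1) y + gRec n P (t+1) (x-1) y)
              (gRec n P (t+1) x (y+1) + gRec n P (t+1) x (y-1)) - gRec n P t x y
        else gRec n P (t+1) (x+1) y + gRec n P (t+1) (x-1) y - gRec n P t x y
      else if 0 < y then
        gRec n P (t+1) x (y+1) + gRec n P (t+1) x (y-1) - gRec n P t x y
      else gRec n P (t+1) 1 0 + gRec n P (t+1) 0 1 - gRec n P t x y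

def fDef (n : ℤ) (P : ℤ → ℤ → ℤ → ℤ) : ℤ → ℤ → ℤ → ℤ := fun x y t =>
  if 0 ≤ t then gRec n P t.toNat x y else 0

lemma gRec_base (n : ℤ) (P : ℤ → ℤ → ℤ → ℤ) :
    ∀ (t : ℕ) (x y : ℤ), (t : ℤ) ≤ x + y → gRec n P t x y = P y (n - x - y) x := by
  intro t x y h
  match t with
  | 0 => rfl
  | 1 => rfl
  | (t+2) =>
    simp only [gRec]; rw [if_pos]
    push_cast at h; omega

lemma fDef_base (n : ℤ) (P : ℤ → ℤ → ℤ → ℤ) (x y t : ℤ) (h0 : 0 ≤ t) (h : t ≤ x + y) :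
    fDef n P x y t = P y (n - x - y) x := by
  rw [fDef, if_pos h0, gRec_base]
  omega

lemma octQ_fDef (n : ℤ) (P : ℤ → ℤ → ℤ → ℤ) : OctQ n P (fDef n P) := by
  refine ⟨?_, ?_, ?_, ?_, ?_⟩
  · rintro x y z ⟨hx, hy, hz, hs⟩
    rw [fDef_base n P z x (n - y) (by omega) (by omega)]
    congr 1
    omega
  · rintro x y t ⟨h1, h2, h3, h4, h5, h6⟩ hlt hx hy
    have ht : x + y + 2 ≤ t + 1 := by omega
    obtain ⟨m, hm⟩ : ∃ m : ℕ, (m : ℤ) = t - 1 := ⟨(t-1).toNat, Int.toNat_of_nonneg (by omega)⟩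
    have e2 : (t+1).toNat = m + 2 := by omega
    have e1 : t.toNat = m + 1 := by omega
    have e0 : (t-1).toNat = m := by omega
    simp only [fDef, if_pos (show (0:ℤ) ≤ t + 1 by omega), if_pos (show (0:ℤ) ≤ t by omega),
      if_pos (show (0:ℤ) ≤ t - 1 by omega), e2, e1, e0]
    simp only [gRec]; rw [if_neg (by omega), if_pos hx, if_pos hy]
  · rintro x t ⟨h1, h2, h3, h4, h5, h6⟩ hlt hx
    have ht : x + 2 ≤ t + 1 := by omega
    obtain ⟨m, hm⟩ : ∃ m : ℕ, (m : ℤ) = t - 1 := ⟨(t-1).toNat, Int.toNat_of_nonneg (by omega)⟩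
    have e2 : (t+1).toNat = m + 2 := by omega
    have e1 : t.toNat = m + 1 := by omega
    have e0 : (t-1).toNat = m := by omega
    simp only [fDef, if_pos (show (0:ℤ) ≤ t + 1 by omega), if_pos (show (0:ℤ) ≤ t by omega),
      if_pos (show (0:ℤ) ≤ t - 1 by omega), e2, e1, e0]
    simp only [gRec]; rw [if_neg (by omega), if_pos hx, if_neg (by omega)]
  · rintro y t ⟨h1, h2, h3, h4, h5, h6⟩ hlt hy
    have ht : y + 2 ≤ t + 1 := by omega
    obtain ⟨m, hm⟩ : ∃ m : ℕ, (m : ℤ) = t - 1 := ⟨(t-1).toNat, Int.toNat_of_nonneg (by omega)⟩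
    have e2 : (t+1).toNat = m + 2 := by omega
    have e1 : t.toNat = m + 1 := by omega
    have e0 : (t-1).toNat = m := by omega
    simp only [fDef, if_pos (show (0:ℤ) ≤ t + 1 by omega), if_pos (show (0:ℤ) ≤ t by omega),
      if_pos (show (0:ℤ) ≤ t - 1 by omega), e2, e1, e0]
    simp only [gRec]; rw [if_neg (by omega), if_neg (by omega), if_pos hy]
  · rintro t ⟨h1, h2, h3, h4, h5, h6⟩ hlt
    have ht : 2 ≤ t + 1 := by omega
    obtain ⟨m, hm⟩ : ∃ m : ℕ, (m : ℤ) = t - 1 := ⟨(t-1).toNat, Int.toNat_of_nonneg (by omega)⟩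
    have e2 : (t+1).toNat = m + 2 := by omega
    have e1 : t.toNat = m + 1 := by omega
    have e0 : (t-1).toNat = m := by omega
    simp only [fDef, if_pos (show (0:ℤ) ≤ t + 1 by omega), if_pos (show (0:ℤ) ≤ t by omega),
      if_pos (show (0:ℤ) ≤ t - 1 by omega), e2, e1, e0]
    simp only [gRec]; rw [if_neg (by omega), if_neg (by omega), if_neg (by omega)]
/-- Time schedule: during chain `m` (chains are applied in decreasing order
`n-1, n-2, …, 1`), after the inner moves `s_1, …, s_k` have been applied. -/
def tau (n m k i : ℤ) : ℤ :=
  if i ≤ k then i + 2*(n-m) else if i ≤ m then i + 2*(n-1-m) else 2*n - i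

/-- The GT-pattern-valued snapshot of `f` at schedule `(m,k)`. -/
def Sfun (n m k : ℤ) (f : ℤ → ℤ → ℤ → ℤ) : ℤ → ℤ → ℤ := fun i j =>
  f (i-j) j (tau n m k i) - f (i-j+1) (j-1) (tau n m k i)

/-- Agreement of two GT-pattern functions on the triangle `1 ≤ j ≤ i ≤ n`. -/
def Agr (n : ℤ) (T g : ℤ → ℤ → ℤ) : Prop :=
  ∀ i j : ℤ, 1 ≤ j → j ≤ i → i ≤ n → T i j = g i j

lemma BK_step (n : ℤ) (P f : ℤ → ℤ → ℤ → ℤ) (hf : OctQ n P f) (m k : ℤ)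
    (hk : 1 ≤ k) (hkm : k ≤ m) (hm : m ≤ n - 1)
    (T : ℤ → ℤ → ℤ) (hT : Agr n T (Sfun n m (k-1) f)) :
    Agr n (BK k T) (Sfun n m k f) := by
  obtain ⟨hinit, h2, h3, h4, h5⟩ := hf
  intro i j hj1 hji hin
  by_cases hik : i = k
  · obtain rfl : i = k := hik
    set t : ℤ := i + 2*(n-1-m) with ht
    have tau_up : tau n m (i-1) (i+1) = t + 1 := by unfold tau; split_ifs <;> omega
    have tau_dn : tau n m (i-1) (i-1) = t + 1 := by unfold tau; split_ifs <;> omega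
    have tau_old : tau n m (i-1) i = t := by unfold tau; split_ifs <;> omega
    have tau_new : tau n m i i = t + 2 := by unfold tau; split_ifs <;> omega
    have eup : ∀ l : ℤ, 1 ≤ l → l ≤ i+1 →
        T (i+1) l = f (i+1-l) l (t+1) - f (i+1-l+1) (l-1) (t+1) := by
      intro l h1 h2
      rw [hT (i+1) l h1 h2 (by omega)]; simp only [Sfun]; rw [tau_up]
    have edn : ∀ l : ℤ, 1 ≤ l → l ≤ i-1 →
        T (i-1) l = f (i-1-l) l (t+1) - f (i-1-l+1) (l-1) (t+1) := by
      intro l h1 h2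
      rw [hT (i-1) l h1 h2 (by omega)]; simp only [Sfun]; rw [tau_dn]
    have eold : T i j = f (i-j) j t - f (i-j+1) (j-1) t := by
      rw [hT i j hj1 hji hin]; simp only [Sfun]; rw [tau_old]
    simp only [BK, Sfun, eq_self_iff_true, if_true]
    rw [tau_new]
    by_cases hj : j = 1 <;> by_cases hjk : j = i
    · -- j = 1 = i
      obtain rfl : j = 1 := hj
      obtain rfl : i = 1 := hjk.symm
      simp only [eq_self_iff_true, if_true]
      have e1 := eup 1 (by omega) (by omega)
      have e2 := eup 2 (by omega) (by omega)
      have rA := h4 1 (t+1) ⟨by omega, by omega, by omega, by omega, by omega, by omega⟩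
        (by omega) (by omega)
      have rB := h3 1 (t+1) ⟨by omega, by omega, by omega, by omega, by omega, by omega⟩
        (by omega) (by omega)
      rw [eold]
      ring_nf at e1 e2 rA rB ⊢
      omega
    · -- j = 1 < i
      obtain rfl : j = 1 := hj
      rw [if_pos rfl, if_neg hjk]
      rw [eold]
      have e1 := eup 1 (by omega) (by omega)
      have e2 := eup 2 (by omega) (by omega)
      have e3 := edn 1 (by omega) (by omega)
      have rA := h2 (i-1) 1 (t+1) ⟨by omega, by omega, by omega, by omega, by omega, by omega⟩
        (by omega) (by omega) (by omega)
      have rB := h3 i (t+1) ⟨by omega, by omega, by omega, by omega, by omega, by omega⟩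
        (by omega) (by omega)
      ring_nf at e1 e2 e3 rA rB ⊢
      omega
    · -- 1 < j = i
      obtain rfl : j = i := hjk
      simp only [eq_self_iff_true, if_true]
      rw [if_neg hj]
      rw [eold]
      have e1 := eup j (by omega) (by omega)
      have e2 := eup (j+1) (by omega) (by omega)
      have e3 := edn (j-1) (by omega) (by omega)
      have rA := h4 j (t+1) ⟨by omega, by omega, by omega, by omega, by omega, by omega⟩
        (by omega) (by omega)
      have rB := h2 1 (j-1) (t+1) ⟨by omega, by omega, by omega, by omega, by omega, by omega⟩
        (by omega) (by omega) (by omega)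
      ring_nf at e1 e2 e3 rA rB ⊢
      omega
    · -- 1 < j < i
      rw [if_neg hj, if_neg hjk]
      rw [eold]
      have e1 := eup j (by omega) (by omega)
      have e2 := eup (j+1) (by omega) (by omega)
      have e3 := edn (j-1) (by omega) (by omega)
      have e4 := edn j (by omega) (by omega)
      have rA := h2 (i-j) j (t+1) ⟨by omega, by omega, by omega, by omega, by omega, by omega⟩
        (by omega) (by omega) (by omega)
      have rB := h2 (i-j+1) (j-1) (t+1)
        ⟨by omega, by omega, by omega, by omega, by omega, by omega⟩
        (by omega) (by omega) (by omega)
      ring_nf at e1 e2 e3 e4 rA rB ⊢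
      omega
  · have e : tau n m k i = tau n m (k-1) i := by unfold tau; split_ifs <;> omega
    simp only [BK, if_neg hik, hT i j hj1 hji hin, Sfun, e]
lemma BKchain_step (n : ℤ) (P f : ℤ → ℤ → ℤ → ℤ) (hf : OctQ n P f) (m : ℤ)
    (hm : m ≤ n - 1) :
    ∀ (k : ℕ), (k : ℤ) ≤ m → ∀ T : ℤ → ℤ → ℤ, Agr n T (Sfun n m 0 f) →
      Agr n (BKchain k T) (Sfun n m (k : ℤ) f) := by
  intro k
  induction k with
  | zero => intro _ T hT; simpa [BKchain] using hT
  | succ k ih =>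
    intro hk T hT
    have ihk := ih (by push_cast at hk ⊢; omega) T hT
    have step := BK_step n P f hf m ((k : ℤ) + 1) (by omega)
      (by push_cast at hk; omega) hm (BKchain k T)
      (by simpa using ihk)
    show Agr n (BK ((k : ℤ) + 1) (BKchain k T)) (Sfun n m ((k : ℕ) + 1 : ℕ) f)
    convert step using 2
    omega
lemma xiGT_step (n : ℤ) (P f : ℤ → ℤ → ℤ → ℤ) (hf : OctQ n P f) :
    ∀ (m : ℕ), (m : ℤ) ≤ n - 1 → ∀ T : ℤ → ℤ → ℤ, Agr n T (Sfun n (m : ℤ) 0 f) →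
      Agr n (xiGT m T) (Sfun n 0 0 f) := by
  intro m
  induction m with
  | zero => intro _ T hT; simpa [xiGT] using hT
  | succ m ih =>
    intro hm T hT
    have hc : Agr n (BKchain (m+1) T) (Sfun n ((m:ℤ)+1) ((m:ℤ)+1) f) := by
      have := BKchain_step n P f hf ((m:ℤ)+1) (by push_cast at hm; omega) (m+1)
        (by push_cast; omega) T (by simpa using hT)
      convert this using 2
      omega
    have hc' : Agr n (BKchain (m+1) T) (Sfun n (m:ℤ) 0 f) := by
      intro i j h1 h2 h3
      rw [hc i j h1 h2 h3]
      have : tau n ((m:ℤ)+1) ((m:ℤ)+1) i = tau n (m:ℤ) 0 i := by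
        unfold tau; split_ifs <;> omega
      simp only [Sfun, this]
    show Agr n (xiGT m (BKchain (m+1) T)) (Sfun n 0 0 f)
    exact ih (by push_cast at hm ⊢; omega) _ hc'
/-- for a hive `P` of size `n`, the GT pattern `\widehat{P⋆}` equals
the Schützenberger involution `ξ(P̃)`. -/
theorem stmt4 (n : ℕ) (hn : 1 ≤ n) (P : ℤ → ℤ → ℤ → ℤ) (hP : IsHive (n : ℤ) P) :
    (∃ f, OctQ (n : ℤ) P f) ∧
    ∀ f : ℤ → ℤ → ℤ → ℤ, OctQ (n : ℤ) P f →
      ∀ i j : ℤ, 1 ≤ j → j ≤ i → i ≤ (n : ℤ) →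
        hatGT (n : ℤ) (PstarFun (n : ℤ) f) i j = xiGT (n - 1) (tildeGT (n : ℤ) P) i j := by

  constructor
  · exact ⟨fDef (n : ℤ) P, octQ_fDef (n : ℤ) P⟩
  · intro f hf i j hj1 hji hin
    have hcast : ((n - 1 : ℕ) : ℤ) = (n : ℤ) - 1 := by omega
    -- the starting pattern agrees with the schedule (n-1, 0)
    have hstart : Agr (n : ℤ) (tildeGT (n : ℤ) P) (Sfun (n : ℤ) ((n - 1 : ℕ) : ℤ) 0 f) := by
      intro i j h1 h2 h3
      have htau : tau (n : ℤ) ((n - 1 : ℕ) : ℤ) 0 i = i := by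
        rw [hcast]; unfold tau; split_ifs <;> omega
      have v1 : f (i - j) j i = P j ((n : ℤ) - i) (i - j) := by
        have := hf.1 j ((n : ℤ) - i) (i - j) ⟨by omega, by omega, by omega, by omega⟩
        rw [show (n : ℤ) - ((n : ℤ) - i) = i by ring] at this
        exact this
      have v2 : f (i - j + 1) (j - 1) i = P (j - 1) ((n : ℤ) - i) (i - j + 1) := by
        have := hf.1 (j - 1) ((n : ℤ) - i) (i - j + 1) ⟨by omega, by omega, by omega, by omega⟩
        rw [show (n : ℤ) - ((n : ℤ) - i) = i by ring] at this
        exact this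
      simp only [tildeGT, Sfun, htau, v1, v2]
    have hfin := xiGT_step (n : ℤ) P f hf (n - 1) (by omega) (tildeGT (n : ℤ) P) hstart
      i j hj1 hji hin
    rw [hfin]
    have htau0 : tau (n : ℤ) 0 0 i = 2 * (n : ℤ) - i := by unfold tau; split_ifs <;> omega
    simp only [hatGT, PstarFun, Sfun, htau0,
      if_pos (show inDelta (n : ℤ) (i - j) j ((n : ℤ) - i) from ⟨by omega, by omega, by omega, by omega⟩),
      if_pos (show inDelta (n : ℤ) (i - j + 1) (j - 1) ((n : ℤ) - i) from ⟨by omega, by omega, by omega, by omega⟩)]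
    rw [show (n : ℤ) + ((n : ℤ) - i) = 2 * (n : ℤ) - i by ring]
    ring
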